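/- For the Walsh-Paley system, setting q_n = 2^{2n} + 2^{2n−2} + ⋯ + 2^2 + 2^0 = ∑_{l=0}^{n} 4^l, for every x ∈ I_{2s} \ I_{2s+1} with 0 ≤ s ≤ n one has |D_{q_n}(x)| ≥ 2^{2s}/2. -/

import Mathlib

open MeasureTheory ENNReal Filter
open scoped Classical

noncomputable section

instance : TopologicalSpace (ZMod 2) := ⊥
instance : DiscreteTopology (ZMod 2) := ⟨rfl⟩
instance : MeasurableSpace (ZMod 2) := ⊤
instance : BorelSpace (ZMod 2) := ⟨borel_eq_top_of_discrete.symm⟩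
instance : IsTopologicalAddGroup (ZMod 2) where
  continuous_add := continuous_of_discreteTopology
  continuous_neg := continuous_of_discreteTopology

/-- The dyadic group `G = (ℤ/2)^ℕ`. -/
abbrev G2 : Type := ℕ → ZMod 2

/-- Normalized Haar (probability) measure on `G2`. -/
def muG : Measure G2 :=
  Measure.addHaarMeasure ⟨⟨Set.univ, isCompact_univ⟩, by
    rw [interior_univ]; exact Set.univ_nonempty⟩

/-- Rademacher functions. -/
def rad (k : ℕ) (x : G2) : ℝ := (-1 : ℝ) ^ ((x k).val)

/-- Walsh–Paley functions. -/
def walsh (n : ℕ) (x : G2) : ℝ :=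
  ∏ k ∈ Finset.range n, if n.testBit k then rad k x else 1

/-- Walsh–Dirichlet kernels. -/
def dirichlet (n : ℕ) (x : G2) : ℝ := ∑ k ∈ Finset.range n, walsh k x

/-- The cylinder sets `I_n`. -/
def cyl (n : ℕ) : Set G2 := {x | ∀ i < n, x i = 0}

/-- Walsh–Fourier coefficients. -/
def fhat (f : G2 → ℝ) (k : ℕ) : ℝ := ∫ x, f x * walsh k x ∂muG

/-- Walsh–Fourier partial sums of a function. -/
def funS (f : G2 → ℝ) (n : ℕ) (x : G2) : ℝ :=
  ∑ k ∈ Finset.range n, fhat f k * walsh k x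

/-- Partial sums of the Walsh series of a dyadic martingale given by coefficients `c`. -/
def mS (c : ℕ → ℝ) (n : ℕ) (x : G2) : ℝ := ∑ k ∈ Finset.range n, c k * walsh k x

/-- The martingale maximal function. -/
def mMax (c : ℕ → ℝ) (x : G2) : ℝ≥0∞ := ⨆ n : ℕ, (‖mS c (2 ^ n) x‖₊ : ℝ≥0∞)

/-- The martingale Hardy space quasi-norm `H_p`. -/
def mHp (p : ℝ) (c : ℕ → ℝ) : ℝ≥0∞ := (∫⁻ x, (mMax c x) ^ p ∂muG) ^ (1 / p)

/-- The maximal function of an integrable function. -/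
def funMax (f : G2 → ℝ) (x : G2) : ℝ≥0∞ := ⨆ n : ℕ, (‖funS f (2 ^ n) x‖₊ : ℝ≥0∞)

/-- The Hardy space quasi-norm of an integrable function. -/
def funHp (p : ℝ) (f : G2 → ℝ) : ℝ≥0∞ := (∫⁻ x, (funMax f x) ^ p ∂muG) ^ (1 / p)

/-- Weak `L^p` quasi-norm. -/
def weakLp (p : ℝ) (f : G2 → ℝ) : ℝ≥0∞ :=
  ⨆ t : NNReal, (t : ℝ≥0∞) * (muG {x | (t : ℝ) < |f x|}) ^ (1 / p)


lemma abs_rad (k : ℕ) (x : G2) : |rad k x| = 1 := by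
  simp [rad, abs_pow]

lemma abs_walsh (n : ℕ) (x : G2) : |walsh n x| = 1 := by
  rw [walsh, Finset.abs_prod]
  apply Finset.prod_eq_one
  intro k _
  split <;> simp [abs_rad]

lemma walsh_ext {n m : ℕ} (h : n ≤ m) (x : G2) :
    walsh n x = ∏ k ∈ Finset.range m, if n.testBit k then rad k x else 1 := by
  rw [walsh]
  apply Finset.prod_subset (Finset.range_subset_range.mpr h)
  intro k hk hk'
  simp only [Finset.mem_range] at hk hk'
  rw [Nat.testBit_lt_two_pow (lt_of_le_of_lt (Nat.le_of_not_lt hk') (Nat.lt_two_pow_self (n := k)))]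
  simp

lemma walsh_split {m : ℕ} (a : ℕ) {b : ℕ} (hb : b < 2 ^ m) (x : G2) :
    walsh (2 ^ m * a + b) x = walsh (2 ^ m * a) x * walsh b x := by
  have h1 : 2 ^ m * a ≤ 2 ^ m * a + b := by omega
  have h2 : b ≤ 2 ^ m * a + b := by omega
  rw [walsh_ext (le_refl (2 ^ m * a + b)) x, walsh_ext h1 x, walsh_ext h2 x,
      ← Finset.prod_mul_distrib]
  apply Finset.prod_congr rfl
  intro k _
  rw [Nat.testBit_two_pow_mul_add a hb k, Nat.testBit_two_pow_mul]
  by_cases hk : k < m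
  · simp [hk, Nat.not_le.mpr hk]
  · have hbk : b.testBit k = false := Nat.testBit_lt_two_pow
      (lt_of_lt_of_le hb (Nat.pow_le_pow_right (by norm_num) (Nat.le_of_not_lt hk)))
    simp [hk, Nat.le_of_not_lt hk, hbk]

lemma walsh_two_pow (m : ℕ) (x : G2) : walsh (2 ^ m) x = rad m x := by
  rw [walsh]
  rw [Finset.prod_eq_single m]
  · simp [Nat.testBit_two_pow_self]
  · intro b _ hb
    rw [Nat.testBit_two_pow_of_ne (Ne.symm hb)]
    simp
  · intro hm
    exact absurd (Finset.mem_range.mpr (Nat.lt_two_pow_self (n := m))) hm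

lemma dirichlet_two_pow (m : ℕ) (x : G2) :
    dirichlet (2 ^ m) x = ∏ j ∈ Finset.range m, (1 + rad j x) := by
  induction m with
  | zero => simp [dirichlet, walsh]
  | succ m ih =>
    have key : dirichlet (2 ^ (m + 1)) x
        = dirichlet (2 ^ m) x + rad m x * dirichlet (2 ^ m) x := by
      simp only [dirichlet]
      rw [pow_succ, mul_two, Finset.sum_range_add, Finset.mul_sum]
      congr 1
      apply Finset.sum_congr rfl
      intro k hk
      have h := walsh_split (m := m) 1 (Finset.mem_range.mp hk) x
      rw [mul_one] at h
      rw [h, walsh_two_pow]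
    rw [key, ih, Finset.prod_range_succ]
    ring

lemma rad_of_zero {k : ℕ} {x : G2} (h : x k = 0) : rad k x = 1 := by
  simp [rad, h]

lemma rad_of_one {k : ℕ} {x : G2} (h : x k ≠ 0) : rad k x = -1 := by
  have hv : (x k).val = 1 := by
    have h2 : (x k).val < 2 := ZMod.val_lt _
    have h0 : (x k).val ≠ 0 := by simpa [ZMod.val_eq_zero] using h
    omega
  simp [rad, hv]

lemma dirichlet_two_pow_of_mem {m : ℕ} {x : G2} (h : ∀ i < m, x i = 0) :
    dirichlet (2 ^ m) x = 2 ^ m := by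
  rw [dirichlet_two_pow]
  have hc : ∀ j ∈ Finset.range m, (1 + rad j x) = 2 := by
    intro j hj
    rw [rad_of_zero (h j (Finset.mem_range.mp hj))]
    norm_num
  rw [Finset.prod_congr rfl hc, Finset.prod_const, Finset.card_range]

lemma dirichlet_two_pow_of_one {m j : ℕ} {x : G2} (hj : j < m) (h : x j ≠ 0) :
    dirichlet (2 ^ m) x = 0 := by
  rw [dirichlet_two_pow]
  exact Finset.prod_eq_zero (Finset.mem_range.mpr hj) (by rw [rad_of_one h]; ring)

lemma abs_dirichlet_le (m : ℕ) (x : G2) : |dirichlet m x| ≤ (m : ℝ) := by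
  rw [dirichlet]
  calc |∑ k ∈ Finset.range m, walsh k x| ≤ ∑ k ∈ Finset.range m, |walsh k x| :=
        Finset.abs_sum_le_sum_abs _ _
    _ = (m : ℝ) := by simp [abs_walsh]

lemma sum_mul_block {m : ℕ} {x : G2} (hz : dirichlet (2 ^ m) x = 0) (A : ℕ) :
    ∑ k ∈ Finset.range (2 ^ m * A), walsh k x = 0 := by
  induction A with
  | zero => simp
  | succ A ih =>
    rw [Nat.mul_succ, Finset.sum_range_add, ih, zero_add]
    have hc : ∀ r ∈ Finset.range (2 ^ m), walsh (2 ^ m * A + r) x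
        = walsh (2 ^ m * A) x * walsh r x :=
      fun r hr => walsh_split A (Finset.mem_range.mp hr) x
    rw [Finset.sum_congr rfl hc, ← Finset.mul_sum]
    have hz' : ∑ r ∈ Finset.range (2 ^ m), walsh r x = 0 := hz
    rw [hz', mul_zero]

lemma two_B_le (s : ℕ) : 2 * (∑ l ∈ Finset.range s, 4 ^ l) ≤ 4 ^ s := by
  induction s with
  | zero => simp
  | succ s ih =>
    rw [Finset.sum_range_succ]
    have h4 : (4 : ℕ) ^ (s + 1) = 4 ^ s * 4 := pow_succ 4 s
    omega

/-- `q_n = 1 + 4 + ... + 4^n`. -/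
def qq (n : ℕ) : ℕ := ∑ l ∈ Finset.range (n + 1), 4 ^ l

theorem stmt3 (n s : ℕ) (hs : s ≤ n) (x : G2)
    (hx : x ∈ cyl (2 * s) \ cyl (2 * s + 1)) :
    (2 : ℝ) ^ (2 * s) / 2 ≤ |dirichlet (qq n) x| := by
  have hmem : ∀ i < 2 * s, x i = 0 := hx.1
  have hxs : x (2 * s) ≠ 0 := by
    intro h
    exact hx.2 (fun i hi => by
      rcases Nat.lt_succ_iff_lt_or_eq.mp hi with hi | hi
      · exact hmem i hi
      · rw [hi]; exact h)
  set B : ℕ := ∑ l ∈ Finset.range s, 4 ^ l with hB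
  have h4s : (4 : ℕ) ^ s = 2 ^ (2 * s) := by
    rw [pow_mul]; norm_num
  have h2B : 2 * B ≤ 2 ^ (2 * s) := h4s ▸ two_B_le s
  have hpos : 0 < (2 : ℕ) ^ (2 * s) := Nat.two_pow_pos _
  have hBlt : B < 2 ^ (2 * s) := by omega
  have hqs : qq s = 2 ^ (2 * s) + B := by
    rw [qq, Finset.sum_range_succ, h4s, add_comm]
  have hstep : dirichlet (qq s) x = 2 ^ (2 * s) - dirichlet B x := by
    rw [dirichlet, hqs, Finset.sum_range_add]
    have hfirst : ∑ k ∈ Finset.range (2 ^ (2 * s)), walsh k x = 2 ^ (2 * s) :=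
      dirichlet_two_pow_of_mem hmem
    have hsecond : ∀ r ∈ Finset.range B,
        walsh (2 ^ (2 * s) + r) x = - walsh r x := by
      intro r hr
      have hrlt : r < 2 ^ (2 * s) := lt_trans (Finset.mem_range.mp hr) hBlt
      have h := walsh_split (m := 2 * s) 1 hrlt x
      rw [mul_one] at h
      rw [h, walsh_two_pow, rad_of_one hxs]
      ring
    rw [hfirst, Finset.sum_congr rfl hsecond, Finset.sum_neg_distrib]
    rw [dirichlet]
    ring
  have hDB : |dirichlet B x| ≤ (B : ℝ) := abs_dirichlet_le B x
  have hB2 : (B : ℝ) ≤ (2 : ℝ) ^ (2 * s) / 2 := by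
    have hc : ((2 * B : ℕ) : ℝ) ≤ ((2 ^ (2 * s) : ℕ) : ℝ) := Nat.cast_le.mpr h2B
    push_cast at hc
    linarith
  have hqsbound : (2 : ℝ) ^ (2 * s) / 2 ≤ |dirichlet (qq s) x| := by
    rw [hstep]
    have habs : |(2 : ℝ) ^ (2 * s)| - |dirichlet B x|
        ≤ |(2 : ℝ) ^ (2 * s) - dirichlet B x| :=
      abs_sub_abs_le_abs_sub _ _
    rw [abs_of_nonneg (by positivity : (0:ℝ) ≤ (2 : ℝ) ^ (2 * s))] at habs
    linarith
  rcases eq_or_lt_of_le hs with rfl | hlt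
  · exact hqsbound
  set A : ℕ := ∑ l ∈ Finset.range (n - s), 4 ^ l with hA
  have h4s1 : (4 : ℕ) ^ (s + 1) = 2 ^ (2 * s + 2) := by
    rw [show 2 * s + 2 = 2 * (s + 1) by ring, pow_mul]; norm_num
  have hqn : qq n = 2 ^ (2 * s + 2) * A + qq s := by
    have hsplit : n + 1 = (s + 1) + (n - s) := by omega
    rw [qq, hsplit, Finset.sum_range_add, add_comm]
    congr 1
    rw [Finset.mul_sum]
    apply Finset.sum_congr rfl
    intro i _
    rw [pow_add, h4s1]
  have hzero : dirichlet (2 ^ (2 * s + 2)) x = 0 :=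
    dirichlet_two_pow_of_one (by omega) hxs
  have hqslt : qq s < 2 ^ (2 * s + 2) := by
    have hp : (2 : ℕ) ^ (2 * s + 2) = 4 * 2 ^ (2 * s) := by ring
    omega
  have hfactor : dirichlet (qq n) x
      = walsh (2 ^ (2 * s + 2) * A) x * dirichlet (qq s) x := by
    rw [dirichlet, hqn, Finset.sum_range_add, sum_mul_block hzero A, zero_add]
    have hc : ∀ r ∈ Finset.range (qq s),
        walsh (2 ^ (2 * s + 2) * A + r) x
        = walsh (2 ^ (2 * s + 2) * A) x * walsh r x := by
      intro r hr
      exact walsh_split A (lt_trans (Finset.mem_range.mp hr) hqslt) x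
    rw [Finset.sum_congr rfl hc, ← Finset.mul_sum]
    rfl
  rw [hfactor, abs_mul, abs_walsh, one_mul]
  exact hqsbound


end
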